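/- Let X be the unit circle in ℝ², let y_a, y_b, y_c, y_d be four points of X in this circular order, and let z be the intersection point of segments [y_a, y_c] and [y_b, y_d]. Let S be a convex set containing points q₁, q₂, q₃, q₄ of X with q₁ in the arc from y_a to y_b, q₂ in the arc from y_b to y_c, q₃ in the arc from y_c to y_d, and q₄ in the arc from y_d to y_a. Then z ∈ S. -/

import Mathlib

open Real

private lemma key_id (u v : ℝ) :
    Real.sin (2*u + 2*v) - Real.sin (2*u) - Real.sin (2*v)
      = -(4 * Real.sin (u+v) * Real.sin u * Real.sin v) := by
  have h1 := Real.sin_sq_add_cos_sq u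
  have h2 := Real.sin_sq_add_cos_sq v
  rw [show 2*u+2*v = 2*(u+v) by ring, Real.sin_two_mul, Real.sin_two_mul,
    Real.sin_two_mul, Real.sin_add, Real.cos_add]
  linear_combination (2*Real.sin u*Real.cos u) * h2 + (2*Real.sin v*Real.cos v) * h1

private lemma chord_expr (α β φ : ℝ) :
    (Real.cos β - Real.cos α) * (Real.sin φ - Real.sin α)
      - (Real.sin β - Real.sin α) * (Real.cos φ - Real.cos α)
      = -(4 * Real.sin ((β-α)/2) * Real.sin ((φ-α)/2) * Real.sin ((β-φ)/2)) := by
  have h := key_id ((φ-α)/2) ((β-φ)/2)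
  rw [show 2*((φ-α)/2) + 2*((β-φ)/2) = β - α by ring,
      show 2*((φ-α)/2) = φ - α by ring, show 2*((β-φ)/2) = β - φ by ring,
      show (φ-α)/2 + (β-φ)/2 = (β-α)/2 by ring] at h
  rw [show ((Real.cos β - Real.cos α) * (Real.sin φ - Real.sin α)
      - (Real.sin β - Real.sin α) * (Real.cos φ - Real.cos α))
      = Real.sin (β - α) - Real.sin (φ - α) - Real.sin (β - φ) by
    rw [Real.sin_sub, Real.sin_sub, Real.sin_sub]; ring]
  exact h

private lemma chord_nonpos {α β φ : ℝ} (h1 : α ≤ φ) (h2 : φ ≤ β)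
    (h3 : β ≤ α + 2 * Real.pi) :
    (Real.cos β - Real.cos α) * (Real.sin φ - Real.sin α)
      - (Real.sin β - Real.sin α) * (Real.cos φ - Real.cos α) ≤ 0 := by
  rw [chord_expr]
  have s1 : 0 ≤ Real.sin ((β-α)/2) :=
    Real.sin_nonneg_of_nonneg_of_le_pi (by linarith) (by linarith)
  have s2 : 0 ≤ Real.sin ((φ-α)/2) :=
    Real.sin_nonneg_of_nonneg_of_le_pi (by linarith) (by linarith)
  have s3 : 0 ≤ Real.sin ((β-φ)/2) :=
    Real.sin_nonneg_of_nonneg_of_le_pi (by linarith) (by linarith)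
  nlinarith [mul_nonneg (mul_nonneg s1 s2) s3]

private lemma chord_nonneg {α β φ : ℝ} (h0 : α ≤ β) (h1 : β ≤ φ)
    (h2 : φ ≤ α + 2 * Real.pi) :
    0 ≤ (Real.cos β - Real.cos α) * (Real.sin φ - Real.sin α)
      - (Real.sin β - Real.sin α) * (Real.cos φ - Real.cos α) := by
  rw [chord_expr]
  have s1 : 0 ≤ Real.sin ((β-α)/2) :=
    Real.sin_nonneg_of_nonneg_of_le_pi (by linarith) (by linarith)
  have s2 : 0 ≤ Real.sin ((φ-α)/2) :=
    Real.sin_nonneg_of_nonneg_of_le_pi (by linarith) (by linarith)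
  have s3 : Real.sin ((β-φ)/2) ≤ 0 :=
    Real.sin_nonpos_of_nonpos_of_neg_pi_le (by linarith) (by linarith)
  nlinarith [mul_nonneg s1 s2]

private lemma quad_det_id (a b c : ℝ) :
    Real.sin (a+c-b) + Real.sin (a+b-c) + Real.sin (b+c-a) - Real.sin (a+b+c)
      = 4 * Real.sin a * Real.sin b * Real.sin c := by
  simp only [Real.sin_add, Real.cos_add, Real.sin_sub, Real.cos_sub]
  ring

private lemma ivt0 (ga gb : ℝ) (h1 : gb ≤ 0) (h2 : 0 ≤ ga) :
    ∃ t : ℝ, 0 ≤ t ∧ t ≤ 1 ∧ t * ga + (1 - t) * gb = 0 := by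
  by_cases h : ga - gb = 0
  · exact ⟨0, le_refl 0, zero_le_one, by
      have hga : ga = 0 := le_antisymm (by linarith) h2
      have hgb : gb = 0 := by linarith
      simp [hga, hgb]⟩
  · have hpos : 0 < ga - gb := lt_of_le_of_ne (by linarith) (Ne.symm h)
    refine ⟨(-gb)/(ga-gb), div_nonneg (by linarith) hpos.le, ?_, ?_⟩
    · rw [div_le_one hpos]; linarith
    · field_simp
      ring

private lemma mem_of_quadrant (S : Set (ℝ × ℝ)) (hS : Convex ℝ S)
    (z q₁ q₂ q₃ q₄ : ℝ × ℝ)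
    (h₁ : q₁ ∈ S) (h₂ : q₂ ∈ S) (h₃ : q₃ ∈ S) (h₄ : q₄ ∈ S)
    (A B C D : ℝ) (hdet : A*D - B*C ≠ 0)
    (hf1 : A*(q₁.1 - z.1) + B*(q₁.2 - z.2) ≤ 0)
    (hf2 : A*(q₂.1 - z.1) + B*(q₂.2 - z.2) ≤ 0)
    (hf3 : 0 ≤ A*(q₃.1 - z.1) + B*(q₃.2 - z.2))
    (hf4 : 0 ≤ A*(q₄.1 - z.1) + B*(q₄.2 - z.2))
    (hg1 : 0 ≤ C*(q₁.1 - z.1) + D*(q₁.2 - z.2))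
    (hg2 : C*(q₂.1 - z.1) + D*(q₂.2 - z.2) ≤ 0)
    (hg3 : C*(q₃.1 - z.1) + D*(q₃.2 - z.2) ≤ 0)
    (hg4 : 0 ≤ C*(q₄.1 - z.1) + D*(q₄.2 - z.2)) :
    z ∈ S := by
  obtain ⟨t₁, ht₁0, ht₁1, ht₁⟩ := ivt0 _ _ hg2 hg1
  set p : ℝ × ℝ := (t₁ * q₁.1 + (1 - t₁) * q₂.1, t₁ * q₁.2 + (1 - t₁) * q₂.2) with hp
  have hpS : p ∈ S := by
    have := hS h₁ h₂ ht₁0 (by linarith : (0:ℝ) ≤ 1 - t₁) (by ring)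
    convert this using 1
    ext <;> simp [hp]
  have hgp : C*(p.1 - z.1) + D*(p.2 - z.2) = 0 := by
    simp only [hp]
    linear_combination ht₁
  have hfp : A*(p.1 - z.1) + B*(p.2 - z.2) ≤ 0 := by
    have e : A*(p.1 - z.1) + B*(p.2 - z.2)
        = t₁ * (A*(q₁.1 - z.1) + B*(q₁.2 - z.2))
          + (1 - t₁) * (A*(q₂.1 - z.1) + B*(q₂.2 - z.2)) := by
      simp only [hp]; ring
    rw [e]
    nlinarith
  obtain ⟨t₂, ht₂0, ht₂1, ht₂⟩ := ivt0 _ _ hg3 hg4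
  set p' : ℝ × ℝ := (t₂ * q₄.1 + (1 - t₂) * q₃.1, t₂ * q₄.2 + (1 - t₂) * q₃.2) with hp'
  have hp'S : p' ∈ S := by
    have := hS h₄ h₃ ht₂0 (by linarith : (0:ℝ) ≤ 1 - t₂) (by ring)
    convert this using 1
    ext <;> simp [hp']
  have hgp' : C*(p'.1 - z.1) + D*(p'.2 - z.2) = 0 := by
    simp only [hp']
    linear_combination ht₂
  have hfp' : 0 ≤ A*(p'.1 - z.1) + B*(p'.2 - z.2) := by
    have e : A*(p'.1 - z.1) + B*(p'.2 - z.2)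
        = t₂ * (A*(q₄.1 - z.1) + B*(q₄.2 - z.2))
          + (1 - t₂) * (A*(q₃.1 - z.1) + B*(q₃.2 - z.2)) := by
      simp only [hp']; ring
    rw [e]
    nlinarith
  obtain ⟨t₃, ht₃0, ht₃1, ht₃⟩ := ivt0 _ _ hfp hfp'
  set w : ℝ × ℝ := (t₃ * p'.1 + (1 - t₃) * p.1, t₃ * p'.2 + (1 - t₃) * p.2) with hw
  have hwS : w ∈ S := by
    have := hS hp'S hpS ht₃0 (by linarith : (0:ℝ) ≤ 1 - t₃) (by ring)
    convert this using 1
    ext <;> simp [hw]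
  have hfw : A*(w.1 - z.1) + B*(w.2 - z.2) = 0 := by
    simp only [hw]
    linear_combination ht₃
  have hgw : C*(w.1 - z.1) + D*(w.2 - z.2) = 0 := by
    simp only [hw]
    linear_combination t₃ * hgp' + (1 - t₃) * hgp
  have e1 : (A*D - B*C) * (w.1 - z.1) = 0 := by linear_combination D*hfw - B*hgw
  have e2 : (A*D - B*C) * (w.2 - z.2) = 0 := by linear_combination A*hgw - C*hfw
  have hw1 : w.1 = z.1 := by
    rcases mul_eq_zero.mp e1 with h | h
    · exact absurd h hdet
    · linarith
  have hw2 : w.2 = z.2 := by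
    rcases mul_eq_zero.mp e2 with h | h
    · exact absurd h hdet
    · linarith
  have : w = z := Prod.ext hw1 hw2
  rwa [this] at hwS

/-- Let `y_a, y_b, y_c, y_d` be four points of the unit circle in counterclockwise
circular order (given by angles `θa < θb < θc < θd < θa + 2π`), and let `z` be the
intersection point of the segments `[y_a, y_c]` and `[y_b, y_d]`. If a convex set `S`
contains points `q₁, q₂, q₃, q₄` of the circle lying respectively on the arcs
`[y_a, y_b]`, `[y_b, y_c]`, `[y_c, y_d]`, `[y_d, y_a]`, then `z ∈ S`. -/
theorem stmt_5 (θa θb θc θd φ₁ φ₂ φ₃ φ₄ : ℝ)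
    (hab : θa < θb) (hbc : θb < θc) (hcd : θc < θd) (hda : θd < θa + 2 * Real.pi)
    (hφ₁ : φ₁ ∈ Set.Icc θa θb) (hφ₂ : φ₂ ∈ Set.Icc θb θc)
    (hφ₃ : φ₃ ∈ Set.Icc θc θd) (hφ₄ : φ₄ ∈ Set.Icc θd (θa + 2 * Real.pi))
    (z : ℝ × ℝ)
    (hz₁ : z ∈ segment ℝ (Real.cos θa, Real.sin θa) (Real.cos θc, Real.sin θc))
    (hz₂ : z ∈ segment ℝ (Real.cos θb, Real.sin θb) (Real.cos θd, Real.sin θd))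
    (S : Set (ℝ × ℝ)) (hS : Convex ℝ S)
    (hq₁ : (Real.cos φ₁, Real.sin φ₁) ∈ S) (hq₂ : (Real.cos φ₂, Real.sin φ₂) ∈ S)
    (hq₃ : (Real.cos φ₃, Real.sin φ₃) ∈ S) (hq₄ : (Real.cos φ₄, Real.sin φ₄) ∈ S) :
    z ∈ S := by
  obtain ⟨hφ₁a, hφ₁b⟩ := hφ₁
  obtain ⟨hφ₂a, hφ₂b⟩ := hφ₂
  obtain ⟨hφ₃a, hφ₃b⟩ := hφ₃
  obtain ⟨hφ₄a, hφ₄b⟩ := hφ₄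
  have pi_pos := Real.pi_pos
  -- F z = 0
  have FzEq : (Real.cos θc - Real.cos θa) * (z.2 - Real.sin θa)
      - (Real.sin θc - Real.sin θa) * (z.1 - Real.cos θa) = 0 := by
    obtain ⟨a, b, ha, hb, habs, hz⟩ := hz₁
    rw [← hz]
    simp only [Prod.fst_add, Prod.snd_add, Prod.smul_fst, Prod.smul_snd, smul_eq_mul]
    linear_combination (Real.cos θc * Real.sin θa - Real.cos θa * Real.sin θc) * habs
  have GzEq : (Real.cos θd - Real.cos θb) * (z.2 - Real.sin θb)
      - (Real.sin θd - Real.sin θb) * (z.1 - Real.cos θb) = 0 := by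
    obtain ⟨a, b, ha, hb, habs, hz⟩ := hz₂
    rw [← hz]
    simp only [Prod.fst_add, Prod.snd_add, Prod.smul_fst, Prod.smul_snd, smul_eq_mul]
    linear_combination (Real.cos θd * Real.sin θb - Real.cos θb * Real.sin θd) * habs
  -- determinant
  have hdet : (Real.sin θa - Real.sin θc) * (Real.cos θd - Real.cos θb)
      - (Real.cos θc - Real.cos θa) * (Real.sin θb - Real.sin θd) ≠ 0 := by
    have hq := quad_det_id ((θc-θa)/2) ((θd-θb)/2) ((θb-θa+θd-θc)/2)
    rw [show (θc-θa)/2 + (θb-θa+θd-θc)/2 - (θd-θb)/2 = θb - θa by ring,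
        show (θc-θa)/2 + (θd-θb)/2 - (θb-θa+θd-θc)/2 = θc - θb by ring,
        show (θd-θb)/2 + (θb-θa+θd-θc)/2 - (θc-θa)/2 = θd - θc by ring,
        show (θc-θa)/2 + (θd-θb)/2 + (θb-θa+θd-θc)/2 = θd - θa by ring] at hq
    have e : (Real.sin θa - Real.sin θc) * (Real.cos θd - Real.cos θb)
        - (Real.cos θc - Real.cos θa) * (Real.sin θb - Real.sin θd)
        = 4 * Real.sin ((θc-θa)/2) * Real.sin ((θd-θb)/2)
            * Real.sin ((θb-θa+θd-θc)/2) := by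
      rw [← hq]
      simp only [Real.sin_sub]
      ring
    rw [e]
    have p1 : 0 < Real.sin ((θc-θa)/2) :=
      Real.sin_pos_of_pos_of_lt_pi (by linarith) (by linarith)
    have p2 : 0 < Real.sin ((θd-θb)/2) :=
      Real.sin_pos_of_pos_of_lt_pi (by linarith) (by linarith)
    have p3 : 0 < Real.sin ((θb-θa+θd-θc)/2) :=
      Real.sin_pos_of_pos_of_lt_pi (by linarith) (by linarith)
    positivity
  -- sign facts
  have hF1 := chord_nonpos (α := θa) (β := θc) (φ := φ₁) (by linarith) (by linarith) (by linarith)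
  have hF2 := chord_nonpos (α := θa) (β := θc) (φ := φ₂) (by linarith) (by linarith) (by linarith)
  have hF3 := chord_nonneg (α := θa) (β := θc) (φ := φ₃) (by linarith) (by linarith) (by linarith)
  have hF4 := chord_nonneg (α := θa) (β := θc) (φ := φ₄) (by linarith) (by linarith) (by linarith)
  have hG2 := chord_nonpos (α := θb) (β := θd) (φ := φ₂) (by linarith) (by linarith) (by linarith)
  have hG3 := chord_nonpos (α := θb) (β := θd) (φ := φ₃) (by linarith) (by linarith) (by linarith)
  have hG4 := chord_nonneg (α := θb) (β := θd) (φ := φ₄) (by linarith) (by linarith) (by linarith)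
  have hG1 := chord_nonneg (α := θb) (β := θd) (φ := φ₁ + 2 * Real.pi)
    (by linarith) (by linarith) (by linarith)
  rw [Real.sin_add_two_pi, Real.cos_add_two_pi] at hG1
  -- apply the quadrant lemma
  refine mem_of_quadrant S hS z (Real.cos φ₁, Real.sin φ₁) (Real.cos φ₂, Real.sin φ₂)
    (Real.cos φ₃, Real.sin φ₃) (Real.cos φ₄, Real.sin φ₄) hq₁ hq₂ hq₃ hq₄
    (Real.sin θa - Real.sin θc) (Real.cos θc - Real.cos θa)
    (Real.sin θb - Real.sin θd) (Real.cos θd - Real.cos θb)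
    hdet ?_ ?_ ?_ ?_ ?_ ?_ ?_ ?_ <;> simp only
  · have e : (Real.sin θa - Real.sin θc) * (Real.cos φ₁ - z.1)
        + (Real.cos θc - Real.cos θa) * (Real.sin φ₁ - z.2)
        = (Real.cos θc - Real.cos θa) * (Real.sin φ₁ - Real.sin θa)
          - (Real.sin θc - Real.sin θa) * (Real.cos φ₁ - Real.cos θa) := by
      linear_combination -FzEq
    rw [e]; exact hF1
  · have e : (Real.sin θa - Real.sin θc) * (Real.cos φ₂ - z.1)
        + (Real.cos θc - Real.cos θa) * (Real.sin φ₂ - z.2)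
        = (Real.cos θc - Real.cos θa) * (Real.sin φ₂ - Real.sin θa)
          - (Real.sin θc - Real.sin θa) * (Real.cos φ₂ - Real.cos θa) := by
      linear_combination -FzEq
    rw [e]; exact hF2
  · have e : (Real.sin θa - Real.sin θc) * (Real.cos φ₃ - z.1)
        + (Real.cos θc - Real.cos θa) * (Real.sin φ₃ - z.2)
        = (Real.cos θc - Real.cos θa) * (Real.sin φ₃ - Real.sin θa)
          - (Real.sin θc - Real.sin θa) * (Real.cos φ₃ - Real.cos θa) := by
      linear_combination -FzEq
    rw [e]; exact hF3
  · have e : (Real.sin θa - Real.sin θc) * (Real.cos φ₄ - z.1)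
        + (Real.cos θc - Real.cos θa) * (Real.sin φ₄ - z.2)
        = (Real.cos θc - Real.cos θa) * (Real.sin φ₄ - Real.sin θa)
          - (Real.sin θc - Real.sin θa) * (Real.cos φ₄ - Real.cos θa) := by
      linear_combination -FzEq
    rw [e]; exact hF4
  · have e : (Real.sin θb - Real.sin θd) * (Real.cos φ₁ - z.1)
        + (Real.cos θd - Real.cos θb) * (Real.sin φ₁ - z.2)
        = (Real.cos θd - Real.cos θb) * (Real.sin φ₁ - Real.sin θb)
          - (Real.sin θd - Real.sin θb) * (Real.cos φ₁ - Real.cos θb) := by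
      linear_combination -GzEq
    rw [e]; exact hG1
  · have e : (Real.sin θb - Real.sin θd) * (Real.cos φ₂ - z.1)
        + (Real.cos θd - Real.cos θb) * (Real.sin φ₂ - z.2)
        = (Real.cos θd - Real.cos θb) * (Real.sin φ₂ - Real.sin θb)
          - (Real.sin θd - Real.sin θb) * (Real.cos φ₂ - Real.cos θb) := by
      linear_combination -GzEq
    rw [e]; exact hG2
  · have e : (Real.sin θb - Real.sin θd) * (Real.cos φ₃ - z.1)
        + (Real.cos θd - Real.cos θb) * (Real.sin φ₃ - z.2)
        = (Real.cos θd - Real.cos θb) * (Real.sin φ₃ - Real.sin θb)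
          - (Real.sin θd - Real.sin θb) * (Real.cos φ₃ - Real.cos θb) := by
      linear_combination -GzEq
    rw [e]; exact hG3
  · have e : (Real.sin θb - Real.sin θd) * (Real.cos φ₄ - z.1)
        + (Real.cos θd - Real.cos θb) * (Real.sin φ₄ - z.2)
        = (Real.cos θd - Real.cos θb) * (Real.sin φ₄ - Real.sin θb)
          - (Real.sin θd - Real.sin θb) * (Real.cos φ₄ - Real.cos θb) := by
      linear_combination -GzEq
    rw [e]; exact hG4
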